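/- Suppose μ : S → ℝ and σ : S → ℝ are continuous, σ is strictly positive, c ∈ ℝ, the level set {s ∈ S : μ(s) = c} equals ∂A_c, and ∂A_c is nonempty. Then for every sequence (η_n) of positive real numbers with η_n → 0, the Hausdorff distance between the inflated boundary A_c^{η_n} and ∂A_c converges to 0 as n → ∞. -/
import Mathlib


open Filter Topology

noncomputable section

/-- The excursion set `A_c = {s : μ s ≥ c}`. -/
def excursionSet {α : Type*} (μ : α → ℝ) (c : ℝ) : Set α := {s | c ≤ μ s}

/-- The inflated boundary `A_c^η = {s : c - η σ(s) ≤ μ(s) ≤ c + η σ(s)}`. -/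
def inflatedBoundary {α : Type*} (μ σ : α → ℝ) (c η : ℝ) : Set α :=
  {s | c - η * σ s ≤ μ s ∧ μ s ≤ c + η * σ s}

/-- **Lemma 1.** The Hausdorff distance between the inflated boundary `A_c^{η_n}` and the
boundary `∂A_c` tends to zero whenever `η_n → 0`. -/
theorem hausdorffDist_inflatedBoundary_tendsto_zero
    {N : ℕ} (hN : 1 ≤ N) (S : Set (EuclideanSpace ℝ (Fin N))) (hS : IsCompact S)
    (μ σ : S → ℝ) (hμ : Continuous μ) (hσc : Continuous σ) (hσ : ∀ s, 0 < σ s) (c : ℝ)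
    (hlevel : {s : S | μ s = c} = frontier (excursionSet μ c))
    (hne : (frontier (excursionSet μ c)).Nonempty)
    (η : ℕ → ℝ) (hη : ∀ n, 0 < η n) (hη0 : Tendsto η atTop (𝓝 0)) :
    Tendsto
      (fun n => Metric.hausdorffDist (inflatedBoundary μ σ c (η n)) (frontier (excursionSet μ c)))
      atTop (𝓝 0) := by
  haveI : CompactSpace S := isCompact_iff_compactSpace.mp hS
  set F := frontier (excursionSet μ c) with hF
  have hFc : IsCompact F := isClosed_frontier.isCompact
  have hmem : ∀ y : S, y ∈ F ↔ μ y = c := by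
    intro y
    constructor
    · intro hy; have : y ∈ {s : S | μ s = c} := hlevel ▸ hy; exact this
    · intro hy; exact hlevel ▸ hy
  rw [Metric.tendsto_atTop]
  intro ε hε
  -- Key: find m > 0 such that points far from F have |μ - c| ≥ m * σ
  have key : ∃ m > 0, ∀ s : S, ε / 2 ≤ Metric.infDist s F → m * σ s ≤ |μ s - c| := by
    set K : Set S := {s | ε / 2 ≤ Metric.infDist s F} with hK
    have hKc : IsCompact K := by
      apply IsClosed.isCompact
      exact isClosed_le continuous_const (Metric.continuous_infDist_pt F)
    rcases K.eq_empty_or_nonempty with h | h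
    · exact ⟨1, one_pos, fun s hs => absurd (show s ∈ K from hs) (by simp [h])⟩
    · have hg : ContinuousOn (fun s : S => |μ s - c| / σ s) K :=
        (((hμ.sub continuous_const).abs.div hσc (fun s => (hσ s).ne')).continuousOn)
      obtain ⟨x, hxK, hxmin⟩ := hKc.exists_isMinOn h hg
      have hxF : x ∉ F := by
        intro hx
        have : Metric.infDist x F = 0 := Metric.infDist_zero_of_mem hx
        have := hxK
        simp only [hK, Set.mem_setOf_eq] at this
        linarith [this, ‹Metric.infDist x F = 0›]
      have hxne : μ x ≠ c := fun h' => hxF ((hmem x).mpr h')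
      refine ⟨|μ x - c| / σ x, div_pos (abs_pos.mpr (sub_ne_zero.mpr hxne)) (hσ x), ?_⟩
      intro s hs
      have := hxmin hs
      have h2 : |μ x - c| / σ x ≤ |μ s - c| / σ s := this
      calc |μ x - c| / σ x * σ s ≤ |μ s - c| / σ s * σ s :=
            mul_le_mul_of_nonneg_right h2 (hσ s).le
        _ = |μ s - c| := div_mul_cancel₀ _ (hσ s).ne'
  obtain ⟨m, hm, hmkey⟩ := key
  have hev : ∀ᶠ n in atTop, η n < m := by
    have := hη0.eventually (eventually_lt_nhds hm)
    exact this
  rw [eventually_atTop] at hev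
  obtain ⟨n₀, hn₀⟩ := hev
  refine ⟨n₀, fun n hn => ?_⟩
  have hηn := hn₀ n hn
  -- hausdorffDist ≤ ε/2 for this n
  have hbound : Metric.hausdorffDist (inflatedBoundary μ σ c (η n)) F ≤ ε / 2 := by
    apply Metric.hausdorffDist_le_of_mem_dist (by linarith)
    · intro x hx
      -- x in inflated boundary: |μ x - c| ≤ η n * σ x < m * σ x, so infDist x F < ε/2
      have habs : |μ x - c| ≤ η n * σ x := by
        rw [abs_le]
        obtain ⟨h1, h2⟩ := hx
        constructor <;> linarith
      have hlt : Metric.infDist x F < ε / 2 := by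
        by_contra h
        push_neg at h
        have := hmkey x h
        nlinarith [hσ x]
      obtain ⟨y, hyF, hyd⟩ := hFc.exists_infDist_eq_dist hne x
      exact ⟨y, hyF, by rw [← hyd]; linarith⟩
    · intro y hy
      refine ⟨y, ?_, by simp; linarith⟩
      have hyc : μ y = c := (hmem y).mp hy
      constructor <;> simp [hyc] <;> nlinarith [hσ y, (hη n)]
  have hnn : 0 ≤ Metric.hausdorffDist (inflatedBoundary μ σ c (η n)) F :=
    Metric.hausdorffDist_nonneg
  rw [Real.dist_eq, abs_sub_comm, abs_of_nonpos (by linarith)]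
  linarith

end
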